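/- If a compact metric space X admits an intrinsic isometry into the d-dimensional Euclidean space ℝ^d, then the Lebesgue covering dimension of X is at most d. -/

import Mathlib

open Filter
open scoped ENNReal

section PullDefs
variable {X Y : Type*} [MetricSpace X] [MetricSpace Y]

/-- `c 0, …, c n` is an `ε`-chain from `x` to `x'`. -/
def IsEpsChain (ε : ℝ) (n : ℕ) (c : ℕ → X) (x x' : X) : Prop :=
  c 0 = x ∧ c n = x' ∧ ∀ i < n, dist (c i) (c (i + 1)) ≤ ε

/-- `pull_{f,ε}(x,x')`: infimum over `ε`-chains of the sum of image distances. -/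
noncomputable def pullEps (f : X → Y) (ε : ℝ) (x x' : X) : ℝ≥0∞ :=
  ⨅ (n : ℕ) (c : ℕ → X) (_ : IsEpsChain ε n c x x'),
    ∑ i ∈ Finset.range n, edist (f (c i)) (f (c (i + 1)))

/-- `pull_f(x,x') = lim_{ε→0+} pull_{f,ε}(x,x') = sup_{ε>0} pull_{f,ε}(x,x')`. -/
noncomputable def pullMet (f : X → Y) (x x' : X) : ℝ≥0∞ :=
  ⨆ (ε : ℝ) (_ : 0 < ε), pullEps f ε x x'

/-- `f` is an intrinsic isometry if the pulled-back metric coincides with the metric of `X`. -/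
def IsIntrinsicIsometry (f : X → Y) : Prop :=
  Continuous f ∧ ∀ x x', edist x x' = pullMet f x x'

end PullDefs

/-- `pack_ε(X)`: maximal number of points at pairwise distance `> ε`. -/
noncomputable def packNum (X : Type*) [MetricSpace X] (ε : ℝ) : ℕ :=
  sSup {n | ∃ s : Finset X, s.card = n ∧ ∀ x ∈ s, ∀ y ∈ s, x ≠ y → ε < dist x y}

/-- Lebesgue covering dimension `≤ d`: every finite open cover admits a finite open refinement
of multiplicity `≤ d + 1`. -/
def CovDimLE (X : Type*) [TopologicalSpace X] (d : ℕ) : Prop :=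
  ∀ (n : ℕ) (U : Fin n → Set X), (∀ i, IsOpen (U i)) → (⋃ i, U i) = Set.univ →
    ∃ (m : ℕ) (V : Fin m → Set X), (∀ j, IsOpen (V j)) ∧ (⋃ j, V j) = Set.univ ∧
      (∀ j, ∃ i, V j ⊆ U i) ∧
      ∀ x : X, ({j : Fin m | x ∈ V j}).ncard ≤ d + 1



set_option linter.unusedSectionVars false
set_option maxHeartbeats 1000000

namespace Petrunin

variable {X Y : Type*} [MetricSpace X] [MetricSpace Y]


variable {X Y : Type*} [MetricSpace X] [MetricSpace Y]

lemma edist_le_chain_sum (f : X → Y) (n : ℕ) (c : ℕ → X) :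
    edist (f (c 0)) (f (c n)) ≤ ∑ i ∈ Finset.range n, edist (f (c i)) (f (c (i + 1))) := by
  induction n with
  | zero => simp
  | succ n ih =>
      rw [Finset.sum_range_succ]
      calc edist (f (c 0)) (f (c (n + 1)))
          ≤ edist (f (c 0)) (f (c n)) + edist (f (c n)) (f (c (n + 1))) := edist_triangle _ _ _
        _ ≤ _ := add_le_add_left ih _

lemma pullEps_le_sum (f : X → Y) {ε : ℝ} {n : ℕ} {c : ℕ → X} {x y : X}
    (hc : IsEpsChain ε n c x y) :
    pullEps f ε x y ≤ ∑ i ∈ Finset.range n, edist (f (c i)) (f (c (i + 1))) :=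
  iInf_le_of_le n (iInf_le_of_le c (iInf_le _ hc))

lemma edist_image_le_pullEps (f : X → Y) (ε : ℝ) (x y : X) :
    edist (f x) (f y) ≤ pullEps f ε x y := by
  refine le_iInf fun n => le_iInf fun c => le_iInf fun hc => ?_
  have := edist_le_chain_sum f n c
  rwa [hc.1, hc.2.1] at this

lemma pullEps_mono (f : X → Y) {ε ε' : ℝ} (h : ε ≤ ε') (x y : X) :
    pullEps f ε' x y ≤ pullEps f ε x y := by
  refine le_iInf fun n => le_iInf fun c => le_iInf fun hc => ?_
  exact pullEps_le_sum f ⟨hc.1, hc.2.1, fun i hi => (hc.2.2 i hi).trans h⟩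

lemma isEpsChain_single {ε : ℝ} {x y : X} (hxy : dist x y ≤ ε) :
    IsEpsChain ε 1 (fun i => if i = 0 then x else y) x y := by
  refine ⟨by simp, by simp, fun i hi => ?_⟩
  interval_cases i
  simpa using hxy

lemma pullEps_le_edist_image (f : X → Y) {ε : ℝ} {x y : X} (hxy : dist x y ≤ ε) :
    pullEps f ε x y ≤ edist (f x) (f y) := by
  have := pullEps_le_sum f (isEpsChain_single hxy)
  simpa using this

lemma lip_of_intrinsic {f : X → Y} (hf : IsIntrinsicIsometry f) (x y : X) :
    edist (f x) (f y) ≤ edist x y := by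
  refine (edist_image_le_pullEps f 1 x y).trans ?_
  rw [hf.2 x y]
  exact le_iSup₂ (f := fun ε (_ : (0:ℝ) < ε) => pullEps f ε x y) 1 one_pos

lemma pullEps_le_pullMet (f : X → Y) {ε : ℝ} (hε : 0 < ε) (x y : X) :
    pullEps f ε x y ≤ pullMet f x y :=
  le_iSup₂ (f := fun ε (_ : (0:ℝ) < ε) => pullEps f ε x y) ε hε






/-- Concatenation of two ε-chains. -/
lemma chain_concat (f : X → Y) {ε : ℝ} {n₁ n₂ : ℕ} {c₁ c₂ : ℕ → X} {x y z : X}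
    (h₁ : IsEpsChain ε n₁ c₁ x y) (h₂ : IsEpsChain ε n₂ c₂ y z) :
    ∃ c : ℕ → X, IsEpsChain ε (n₁ + n₂) c x z ∧
      (∀ i ≤ n₁ + n₂, (∃ j ≤ n₁, c i = c₁ j) ∨ (∃ j ≤ n₂, c i = c₂ j)) ∧
      ∑ i ∈ Finset.range (n₁ + n₂), edist (f (c i)) (f (c (i + 1))) =
        (∑ i ∈ Finset.range n₁, edist (f (c₁ i)) (f (c₁ (i + 1)))) +
        ∑ i ∈ Finset.range n₂, edist (f (c₂ i)) (f (c₂ (i + 1))) := by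
  classical
  refine ⟨fun i => if i < n₁ then c₁ i else c₂ (i - n₁), ⟨?_, ?_, ?_⟩, ?_, ?_⟩
  · by_cases h : 0 < n₁
    · simp [h, h₁.1]
    · have hn : n₁ = 0 := by omega
      have : x = y := by rw [← h₁.1, ← h₁.2.1, hn]
      simp [hn, h₂.1, this]
  · have : ¬ (n₁ + n₂ < n₁) := by omega
    simp [this, h₂.2.1]
  · intro i hi
    rcases lt_trichotomy (i + 1) n₁ with h | h | h
    · have hi1 : i < n₁ := by omega
      simp only [if_pos hi1, if_pos h]
      exact h₁.2.2 i (by omega)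
    · have hi1 : i < n₁ := by omega
      have : ¬ (i + 1 < n₁) := by omega
      simp only [if_pos hi1, if_neg this]
      have e1 : i + 1 - n₁ = 0 := by omega
      rw [e1, h₂.1, ← h₁.2.1, ← h]
      exact h₁.2.2 i (by omega)
    · have hi1 : ¬ (i < n₁) := by omega
      have hi2 : ¬ (i + 1 < n₁) := by omega
      simp only [if_neg hi1, if_neg hi2]
      have e1 : i + 1 - n₁ = (i - n₁) + 1 := by omega
      rw [e1]
      exact h₂.2.2 (i - n₁) (by omega)
  · intro i hi
    by_cases h : i < n₁
    · exact Or.inl ⟨i, by omega, by simp [h]⟩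
    · exact Or.inr ⟨i - n₁, by omega, by simp [h]⟩
  · rw [Finset.sum_range_add]
    congr 1
    · refine Finset.sum_congr rfl fun i hi => ?_
      have hi' : i < n₁ := Finset.mem_range.1 hi
      by_cases h : i + 1 < n₁
      · simp [hi', h]
      · have e0 : i + 1 = n₁ := by omega
        have e1 : i + 1 - n₁ = 0 := by omega
        simp only [if_pos hi', if_neg h, e1]
        rw [h₂.1, ← h₁.2.1, e0]
    · refine Finset.sum_congr rfl fun i hi => ?_
      have h1 : ¬ (n₁ + i < n₁) := by omega
      have h2 : ¬ (n₁ + i + 1 < n₁) := by omega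
      have e1 : n₁ + i - n₁ = i := by omega
      have e2 : n₁ + i + 1 - n₁ = i + 1 := by omega
      simp only [if_neg h1, if_neg h2, e1, e2]

/-- Reversal of an ε-chain. -/
lemma chain_reverse {ε : ℝ} {n : ℕ} {c : ℕ → X} {x y : X} (h : IsEpsChain ε n c x y) :
    IsEpsChain ε n (fun i => c (n - i)) y x := by
  refine ⟨by simp [h.2.1], by simp [h.1], fun i hi => ?_⟩
  simp only []
  have e1 : n - i = (n - (i+1)) + 1 := by omega
  rw [dist_comm]
  simp only [e1]
  exact h.2.2 _ (by omega)

lemma exists_chain_of_lt (f : X → Y) {ε : ℝ} {x y : X} {C : ℝ≥0∞}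
    (h : pullEps f ε x y < C) :
    ∃ n c, IsEpsChain ε n c x y ∧
      ∑ i ∈ Finset.range n, edist (f (c i)) (f (c (i + 1))) < C := by
  simp only [pullEps, iInf_lt_iff] at h
  obtain ⟨n, c, hc, hs⟩ := h
  exact ⟨n, c, hc, hs⟩

lemma pullEps_triangle (f : X → Y) (ε : ℝ) (x y z : X) :
    pullEps f ε x z ≤ pullEps f ε x y + pullEps f ε y z := by
  refine ENNReal.le_of_forall_pos_le_add fun η hη hfin => ?_
  have hA : pullEps f ε x y < ⊤ := lt_of_le_of_lt le_self_add hfin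
  have hB : pullEps f ε y z < ⊤ := lt_of_le_of_lt le_add_self hfin
  have hη2 : (0:ℝ≥0∞) < (η:ℝ≥0∞)/2 := by
    simp [ENNReal.div_pos_iff, hη.ne']
  obtain ⟨n₁, c₁, hc₁, hs₁⟩ := exists_chain_of_lt f
    (ENNReal.lt_add_right hA.ne hη2.ne' : pullEps f ε x y < pullEps f ε x y + (η:ℝ≥0∞)/2)
  obtain ⟨n₂, c₂, hc₂, hs₂⟩ := exists_chain_of_lt f
    (ENNReal.lt_add_right hB.ne hη2.ne' : pullEps f ε y z < pullEps f ε y z + (η:ℝ≥0∞)/2)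
  obtain ⟨c, hc, -, hsum⟩ := chain_concat f hc₁ hc₂
  calc pullEps f ε x z ≤ _ := pullEps_le_sum f hc
    _ = _ + _ := hsum
    _ ≤ (pullEps f ε x y + (η:ℝ≥0∞)/2) + (pullEps f ε y z + (η:ℝ≥0∞)/2) :=
        add_le_add hs₁.le hs₂.le
    _ = pullEps f ε x y + pullEps f ε y z + ((η:ℝ≥0∞)/2 + (η:ℝ≥0∞)/2) := by ring
    _ = pullEps f ε x y + pullEps f ε y z + η := by rw [ENNReal.add_halves]





lemma pullEps_extend (f : X → Y) {ε : ℝ} {x y x' y' : X}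
    (hx : dist x' x ≤ ε) (hy : dist y y' ≤ ε) :
    pullEps f ε x' y' ≤ edist (f x') (f x) + pullEps f ε x y + edist (f y) (f y') :=
  calc pullEps f ε x' y' ≤ pullEps f ε x' x + pullEps f ε x y' := pullEps_triangle f ε _ _ _
    _ ≤ pullEps f ε x' x + (pullEps f ε x y + pullEps f ε y y') :=
        add_le_add_right (pullEps_triangle f ε _ _ _) _
    _ ≤ edist (f x') (f x) + (pullEps f ε x y + edist (f y) (f y')) :=
        add_le_add (pullEps_le_edist_image f hx)
          (add_le_add_right (pullEps_le_edist_image f hy) _)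
    _ = _ := by ring

/-- Key uniform approximation lemma. -/
lemma star [CompactSpace X] {ι : X → Y} (hι : IsIntrinsicIsometry ι)
    {ρ : ℝ≥0∞} (hρ : 0 < ρ) :
    ∃ ε : ℝ, 0 < ε ∧ ∀ x y : X, edist x y ≤ pullEps ι ε x y + ρ := by
  by_contra hcon
  push_neg at hcon
  have hsel : ∀ k : ℕ, ∃ p : X × X,
      pullEps ι (1/(k+1)) p.1 p.2 + ρ < edist p.1 p.2 := by
    intro k
    obtain ⟨x, y, hxy⟩ := hcon (1/(k+1)) (by positivity)
    exact ⟨(x, y), hxy⟩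
  choose w hw using hsel
  obtain ⟨p, φ, hφ, hconv⟩ := CompactSpace.tendsto_subseq w
  set x := p.1 with hx
  set y := p.2 with hy
  have claim : ∀ ε' : ℝ, 0 < ε' → pullEps ι ε' x y + ρ ≤ edist x y := by
    intro ε' hε'
    have main : ∀ η : ℝ, 0 < η → pullEps ι ε' x y + ρ ≤ edist x y + ENNReal.ofReal (4*η) := by
      intro η hη
      set r := min ε' η with hrdef
      have hrpos : 0 < r := lt_min hε' hη
      obtain ⟨K₁, hK₁⟩ := (Metric.tendsto_atTop).1 hconv r hrpos
      obtain ⟨K₂, hK₂⟩ := exists_nat_gt (1/ε')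
      set k := max K₁ K₂ with hk
      set a := (w (φ k)).1 with ha
      set b := (w (φ k)).2 with hb
      have hdp : dist (w (φ k)) p < r := hK₁ k (le_max_left _ _)
      have hda : dist a x < r := by
        refine lt_of_le_of_lt ?_ hdp
        rw [Prod.dist_eq]
        exact le_max_left _ _
      have hdb : dist b y < r := by
        refine lt_of_le_of_lt ?_ hdp
        rw [Prod.dist_eq]
        exact le_max_right _ _
      have hεk : (1:ℝ)/(φ k + 1) ≤ ε' := by
        have h1 : (K₂:ℝ) ≤ (φ k : ℝ) + 1 := by
          have : (K₂:ℕ) ≤ φ k := le_trans (le_max_right K₁ K₂) hφ.le_apply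
          exact_mod_cast le_trans this (Nat.le_succ _)
        have h2 : (1:ℝ)/ε' < (φ k : ℝ) + 1 := lt_of_lt_of_le hK₂ h1
        have hpos : (0:ℝ) < (φ k : ℝ) + 1 := by positivity
        rw [div_le_iff₀ hpos]
        rw [div_lt_iff₀ hε'] at h2
        nlinarith
      have step1 : pullEps ι ε' x y ≤
          edist (ι x) (ι a) + pullEps ι ε' a b + edist (ι b) (ι y) :=
        pullEps_extend ι (by rw [dist_comm]; exact hda.le.trans (min_le_left _ _))
          (by exact hdb.le.trans (min_le_left _ _))
      have step2 : pullEps ι ε' a b ≤ pullEps ι (1/(φ k + 1)) a b := by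
        have := pullEps_mono ι hεk a b
        exact_mod_cast this
      have step3 : pullEps ι (1/(φ k + 1)) a b + ρ ≤ edist a b := by
        have := hw (φ k)
        exact_mod_cast this.le
      have hexa : edist x a ≤ ENNReal.ofReal η := by
        rw [edist_dist, dist_comm]
        exact ENNReal.ofReal_le_ofReal (hda.le.trans (min_le_right _ _))
      have hexb : edist b y ≤ ENNReal.ofReal η := by
        rw [edist_dist]
        exact ENNReal.ofReal_le_ofReal (hdb.le.trans (min_le_right _ _))
      have hlipxa : edist (ι x) (ι a) ≤ ENNReal.ofReal η :=
        (lip_of_intrinsic hι x a).trans hexa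
      have hlipby : edist (ι b) (ι y) ≤ ENNReal.ofReal η :=
        (lip_of_intrinsic hι b y).trans hexb
      have hab : edist a b ≤ edist x y + ENNReal.ofReal η + ENNReal.ofReal η := by
        calc edist a b ≤ edist a x + edist x y + edist y b := edist_triangle4 a x y b
          _ = edist x a + edist x y + edist b y := by rw [edist_comm a x, edist_comm y b]
          _ ≤ ENNReal.ofReal η + edist x y + ENNReal.ofReal η := by
              exact add_le_add (add_le_add_left hexa _) hexb
          _ = edist x y + ENNReal.ofReal η + ENNReal.ofReal η := by ring
      calc pullEps ι ε' x y + ρ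
          ≤ (edist (ι x) (ι a) + pullEps ι ε' a b + edist (ι b) (ι y)) + ρ :=
            add_le_add_left step1 _
        _ ≤ (ENNReal.ofReal η + pullEps ι (1/(φ k + 1)) a b + ENNReal.ofReal η) + ρ :=
            add_le_add_left (add_le_add (add_le_add hlipxa step2) hlipby) _
        _ = (pullEps ι (1/(φ k + 1)) a b + ρ) + (ENNReal.ofReal η + ENNReal.ofReal η) := by ring
        _ ≤ edist a b + (ENNReal.ofReal η + ENNReal.ofReal η) := add_le_add_left step3 _
        _ ≤ (edist x y + ENNReal.ofReal η + ENNReal.ofReal η) +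
              (ENNReal.ofReal η + ENNReal.ofReal η) := add_le_add_left hab _
        _ = edist x y + (ENNReal.ofReal η + ENNReal.ofReal η +
              (ENNReal.ofReal η + ENNReal.ofReal η)) := by ring
        _ = edist x y + ENNReal.ofReal (4*η) := by
            rw [← ENNReal.ofReal_add hη.le hη.le,
              ← ENNReal.ofReal_add (by linarith : (0:ℝ) ≤ η + η) (by linarith : (0:ℝ) ≤ η + η)]
            congr 1
            ring
    refine ENNReal.le_of_forall_pos_le_add fun η hη _ => ?_
    have := main ((η:ℝ)/4) (by positivity)
    have h4 : ENNReal.ofReal (4*((η:ℝ)/4)) = (η : ℝ≥0∞) := by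
      rw [show 4*((η:ℝ)/4) = (η:ℝ) by ring]
      exact ENNReal.ofReal_coe_nnreal
    rwa [h4] at this
  have hsup : pullMet ι x y + ρ ≤ edist x y := by
    rw [pullMet, ENNReal.biSup_add' ⟨1, one_pos⟩]
    exact iSup₂_le fun ε' hε' => claim ε' hε'
  rw [← hι.2 x y] at hsup
  have : ρ ≤ 0 := by
    have h0 : edist x y + ρ ≤ edist x y + 0 := by simpa using hsup
    exact (ENNReal.add_le_add_iff_left (edist_ne_top x y)).1 h0
  exact hρ.not_ge this





/-- `ε`-chain connectivity within a set `S`. -/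
def ChainIn (ε : ℝ) (S : Set X) (x y : X) : Prop :=
  ∃ n c, IsEpsChain ε n c x y ∧ ∀ i ≤ n, c i ∈ S

lemma ChainIn.refl {ε : ℝ} {S : Set X} {x : X} (hx : x ∈ S) : ChainIn ε S x x :=
  ⟨0, fun _ => x, ⟨rfl, rfl, fun i hi => absurd hi (Nat.not_lt_zero i)⟩,
    fun _ _ => hx⟩

lemma ChainIn.mem_left {ε : ℝ} {S : Set X} {x y : X} (h : ChainIn ε S x y) : x ∈ S := by
  obtain ⟨n, c, hc, hm⟩ := h
  have := hm 0 (Nat.zero_le n)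
  rwa [hc.1] at this

lemma ChainIn.mem_right {ε : ℝ} {S : Set X} {x y : X} (h : ChainIn ε S x y) : y ∈ S := by
  obtain ⟨n, c, hc, hm⟩ := h
  have := hm n le_rfl
  rwa [hc.2.1] at this

lemma ChainIn.symm {ε : ℝ} {S : Set X} {x y : X} (h : ChainIn ε S x y) : ChainIn ε S y x := by
  obtain ⟨n, c, hc, hm⟩ := h
  exact ⟨n, _, chain_reverse hc, fun i hi => hm _ (by omega)⟩

lemma ChainIn.trans {ε : ℝ} {S : Set X} {x y z : X} (h₁ : ChainIn ε S x y)
    (h₂ : ChainIn ε S y z) : ChainIn ε S x z := by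
  obtain ⟨n₁, c₁, hc₁, hm₁⟩ := h₁
  obtain ⟨n₂, c₂, hc₂, hm₂⟩ := h₂
  obtain ⟨c, hc, hmem, -⟩ := chain_concat (fun x => x) hc₁ hc₂
  refine ⟨n₁ + n₂, c, hc, fun i hi => ?_⟩
  rcases hmem i hi with ⟨j, hj, he⟩ | ⟨j, hj, he⟩
  · rw [he]; exact hm₁ j hj
  · rw [he]; exact hm₂ j hj

lemma ChainIn.extend {ε : ℝ} {S : Set X} {x y z : X} (h : ChainIn ε S x y)
    (hz : z ∈ S) (hd : dist y z ≤ ε) : ChainIn ε S x z := by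
  classical
  obtain ⟨n, c, hc, hm⟩ := h
  refine ⟨n + 1, fun i => if i ≤ n then c i else z,
    ⟨by simp only [if_pos (Nat.zero_le n), hc.1],
     by simp only [if_neg (by omega : ¬ (n + 1 ≤ n))], fun i hi => ?_⟩,
    fun i hi => ?_⟩
  · by_cases h1 : i + 1 ≤ n
    · simp only [if_pos (by omega : i ≤ n), if_pos h1]
      exact hc.2.2 i (by omega)
    · have h2 : i = n := by omega
      subst h2
      simp only [if_pos le_rfl, if_neg h1]
      rw [hc.2.1]
      exact hd
  · by_cases h1 : i ≤ n
    · simp only [if_pos h1]; exact hm i h1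
    · simp only [if_neg h1]; exact hz

/-- Chain classes of an open set are open. -/
lemma isOpen_chainClass {ε : ℝ} (hε : 0 < ε) {S : Set X} (hS : IsOpen S) (x : X) :
    IsOpen {y | ChainIn ε S x y} := by
  rw [Metric.isOpen_iff]
  intro y hy
  obtain ⟨r, hr, hball⟩ := Metric.isOpen_iff.1 hS y hy.mem_right
  refine ⟨min r ε, lt_min hr hε, fun z hz => ?_⟩
  rw [Metric.mem_ball] at hz
  exact hy.extend (hball (by rw [Metric.mem_ball]; exact lt_of_lt_of_le hz (min_le_left _ _)))
    (by rw [dist_comm]; exact hz.le.trans (min_le_right _ _))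

/-- Packing bound from compactness. -/
lemma exists_packing_bound (X : Type*) [MetricSpace X] [CompactSpace X] {ε : ℝ} (hε : 0 < ε) :
    ∃ N : ℕ, ∀ F : Finset X, (∀ a ∈ F, ∀ b ∈ F, a ≠ b → ε < dist a b) → F.card ≤ N := by
  classical
  obtain ⟨t, -, htf, hcov⟩ :=
    finite_cover_balls_of_compact (isCompact_univ : IsCompact (Set.univ : Set X))
      (show 0 < ε/3 by linarith)
  refine ⟨htf.toFinset.card, fun F hF => ?_⟩
  have hsel : ∀ a : X, ∃ z, z ∈ htf.toFinset ∧ a ∈ Metric.ball z (ε/3) := by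
    intro a
    have := hcov (Set.mem_univ a)
    simp only [Set.mem_iUnion] at this
    obtain ⟨z, hz, hmem⟩ := this
    exact ⟨z, htf.mem_toFinset.2 hz, hmem⟩
  choose g hg hgm using hsel
  refine Finset.card_le_card_of_injOn g (fun a _ => hg a) ?_
  intro a ha b hb hab
  by_contra hne
  have t1 := dist_triangle a (g a) b
  have e : dist (g a) b = dist (g b) b := by rw [hab]
  have h2 : dist a (g a) < ε/3 := Metric.mem_ball.1 (hgm a)
  have h3 : dist (g b) b < ε/3 := by rw [dist_comm]; exact Metric.mem_ball.1 (hgm b)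
  have := hF a ha b hb hne
  linarith

/-- A chain in `S` can be shortened to have length at most `2N`. -/
lemma ChainIn.exists_short {ε : ℝ} (hε : 0 < ε) {S : Set X} {x y : X}
    (h : ChainIn ε S x y) {N : ℕ}
    (hN : ∀ F : Finset X, (∀ a ∈ F, ∀ b ∈ F, a ≠ b → ε < dist a b) → F.card ≤ N) :
    ∃ n c, n ≤ 2*N ∧ IsEpsChain ε n c x y ∧ ∀ i ≤ n, c i ∈ S := by
  classical
  have hP : ∃ n, ∃ c, IsEpsChain ε n c x y ∧ ∀ i ≤ n, c i ∈ S := h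
  set n₀ := Nat.find hP with hn₀
  obtain ⟨c, hc, hm⟩ := Nat.find_spec hP
  have key : ∀ i j, i + 2 ≤ j → j ≤ n₀ → ε < dist (c i) (c j) := by
    intro i j hij hj
    by_contra hle
    push_neg at hle
    set k := j - i - 1 with hkdef
    have hk1 : 1 ≤ k := by omega
    have hkn : k ≤ n₀ := by omega
    have hshort : ∃ c', IsEpsChain ε (n₀ - k) c' x y ∧ ∀ t ≤ n₀ - k, c' t ∈ S := by
      refine ⟨fun t => if t ≤ i then c t else c (t + k), ⟨?_, ?_, ?_⟩, ?_⟩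
      · simp [hc.1]
      · have h1 : ¬ (n₀ - k ≤ i) := by omega
        have h2 : n₀ - k + k = n₀ := by omega
        simp only [if_neg h1, h2, hc.2.1]
        exact hc.2.1
      · intro t ht
        rcases lt_trichotomy t i with h1 | h1 | h1
        · simp only [if_pos h1.le, if_pos (by omega : t + 1 ≤ i)]
          exact hc.2.2 t (by omega)
        · subst h1
          simp only [if_pos le_rfl, if_neg (by omega : ¬ (t + 1 ≤ t))]
          have : t + 1 + k = j := by omega
          rw [this]
          exact hle
        · simp only [if_neg (by omega : ¬ (t ≤ i)), if_neg (by omega : ¬ (t + 1 ≤ i))]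
          have : t + 1 + k = (t + k) + 1 := by omega
          rw [this]
          exact hc.2.2 (t + k) (by omega)
      · intro t ht
        by_cases h1 : t ≤ i
        · simp only [if_pos h1]; exact hm t (by omega)
        · simp only [if_neg h1]; exact hm (t + k) (by omega)
    exact Nat.find_min hP (show n₀ - k < n₀ by omega) hshort
  -- packing bound on n₀
  have hbound : n₀ ≤ 2*N := by
    set F := (Finset.range (n₀/2 + 1)).image fun t => c (2*t) with hF
    have hinj : Set.InjOn (fun t => c (2*t)) ↑(Finset.range (n₀/2 + 1)) := by
      intro t ht t' ht' he
      simp only [Finset.coe_range, Set.mem_Iio] at ht ht'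
      by_contra hne
      have he' : c (2*t) = c (2*t') := he
      rcases Nat.lt_or_ge t t' with hlt | hge
      · have := key (2*t) (2*t') (by omega) (by omega)
        rw [he'] at this
        simp at this
        linarith
      · have hlt : t' < t := by omega
        have := key (2*t') (2*t) (by omega) (by omega)
        rw [he'] at this
        simp at this
        linarith
    have hcard : F.card = n₀/2 + 1 := by
      rw [hF, Finset.card_image_of_injOn hinj, Finset.card_range]
    have hsep : ∀ a ∈ F, ∀ b ∈ F, a ≠ b → ε < dist a b := by
      intro a ha b hb hne
      simp only [hF, Finset.mem_image, Finset.mem_range] at ha hb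
      obtain ⟨t, ht, rfl⟩ := ha
      obtain ⟨t', ht', rfl⟩ := hb
      have hne' : t ≠ t' := fun hh => hne (by rw [hh])
      rcases Nat.lt_or_ge t t' with hlt | hge
      · exact key (2*t) (2*t') (by omega) (by omega)
      · rw [dist_comm]
        exact key (2*t') (2*t) (by omega) (by omega)
    have := hN F hsep
    omega
  exact ⟨n₀, c, hbound, hc, hm⟩


end Petrunin

namespace Petrunin


/-- Staggered brick in `ℝ^d`, family `k`, position `m`, scale `s`. -/
def brick (d : ℕ) (s : ℝ) (k : ℕ) (m : Fin d → ℤ) : Set (EuclideanSpace ℝ (Fin d)) :=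
  {y | ∀ i : Fin d, s * (((d:ℝ)+1) * (m i) + k) - s/4 < y i ∧
    y i < s * (((d:ℝ)+1) * (m i) + k + d) + s/4}

lemma isOpen_brick (d : ℕ) (s : ℝ) (k : ℕ) (m : Fin d → ℤ) : IsOpen (brick d s k m) := by
  have : brick d s k m = ⋂ i : Fin d,
      (fun y : EuclideanSpace ℝ (Fin d) => y i) ⁻¹'
        Set.Ioo (s * (((d:ℝ)+1) * (m i) + k) - s/4) (s * (((d:ℝ)+1) * (m i) + k + d) + s/4) := by
    ext y
    simp [brick, Set.mem_iInter, Set.mem_Ioo]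
  rw [this]
  exact isOpen_iInter_of_finite fun i => (isOpen_Ioo).preimage (by fun_prop)

/-- Auxiliary structure lemma for "bad" residues. -/
lemma bad_struct (d : ℕ) (v : ℝ)
    (H : ∀ m : ℤ, ¬(((d:ℝ)+1) * m - 1/4 < v ∧ v < ((d:ℝ)+1) * m + d + 1/4)) :
    ∃ m : ℤ, ((d:ℝ)+1) * m + d + 1/4 ≤ v ∧ v ≤ ((d:ℝ)+1) * m + d + 3/4 := by
  set c : ℝ := (d:ℝ) + 1 with hc_def
  have hc : 0 < c := by positivity
  set m₀ : ℤ := ⌊(v + 1/4)/c⌋ with hm₀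
  have h1 : (m₀ : ℝ) ≤ (v + 1/4)/c := Int.floor_le _
  have h2 : (v + 1/4)/c < m₀ + 1 := Int.lt_floor_add_one _
  have h1' : c * m₀ ≤ v + 1/4 := by
    rw [mul_comm]
    exact (le_div_iff₀ hc).1 h1
  have h2' : v + 1/4 < c * (m₀ + 1) := by
    rw [mul_comm]
    exact (div_lt_iff₀ hc).1 h2
  by_cases he : c * m₀ = v + 1/4
  · refine ⟨m₀ - 1, ?_, ?_⟩
    · push_cast
      nlinarith
    · push_cast
      nlinarith
  · have hlt : c * m₀ - 1/4 < v := by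
      have : c * m₀ < v + 1/4 := lt_of_le_of_ne h1' he
      linarith
    have hge : ¬ (v < c * m₀ + d + 1/4) := fun hv => H m₀ ⟨hlt, hv⟩
    push_neg at hge
    refine ⟨m₀, hge, ?_⟩
    have : c * (m₀ + 1) = c * m₀ + d + 1 := by
      rw [hc_def]; ring
    linarith

/-- Every point lies in some brick. -/
lemma brick_cover (d : ℕ) {s : ℝ} (hs : 0 < s) (y : EuclideanSpace ℝ (Fin d)) :
    ∃ k : Fin (d+1), ∃ m : Fin d → ℤ, y ∈ brick d s (k : ℕ) m := by
  classical
  set good : Fin (d+1) → Fin d → Prop := fun k i => ∃ mi : ℤ,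
    s * (((d:ℝ)+1) * mi + (k:ℕ)) - s/4 < y i ∧
    y i < s * (((d:ℝ)+1) * mi + (k:ℕ) + d) + s/4 with hgood
  have hbad : ∀ (k : Fin (d+1)) (i : Fin d), ¬ good k i →
      ∃ m : ℤ, ((d:ℝ)+1) * m + d + 1/4 ≤ y i / s - (k:ℕ) ∧
        y i / s - (k:ℕ) ≤ ((d:ℝ)+1) * m + d + 3/4 := by
    intro k i hk
    apply bad_struct d (y i / s - (k:ℕ))
    intro m hm
    apply hk
    refine ⟨m, ?_, ?_⟩
    · have h1 : ((d:ℝ)+1) * m + (k:ℕ) - 1/4 < y i / s := by linarith [hm.1]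
      have h2 : s * (((d:ℝ)+1) * m + (k:ℕ) - 1/4) < y i := by
        rw [mul_comm]
        exact (lt_div_iff₀ hs).1 h1
      nlinarith
    · have h1 : y i / s < ((d:ℝ)+1) * m + (k:ℕ) + d + 1/4 := by linarith [hm.2]
      have h2 : y i < s * (((d:ℝ)+1) * m + (k:ℕ) + d + 1/4) := by
        rw [mul_comm]
        exact (div_lt_iff₀ hs).1 h1
      nlinarith
  have huniq : ∀ i : Fin d, ∀ k k' : Fin (d+1), ¬ good k i → ¬ good k' i → k = k' := by
    intro i k k' hk hk'
    obtain ⟨m, hm1, hm2⟩ := hbad k i hk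
    obtain ⟨m', hm1', hm2'⟩ := hbad k' i hk'
    -- (k' - k : ℝ) is within 1/2 of (d+1)(m - m')
    have hz1 : ((k':ℕ):ℝ) - (k:ℕ) - ((d:ℝ)+1) * (m - m') ≤ 1/2 := by nlinarith
    have hz2 : -(1/2 : ℝ) ≤ ((k':ℕ):ℝ) - (k:ℕ) - ((d:ℝ)+1) * (m - m') := by nlinarith
    set z : ℤ := ((k':ℕ):ℤ) - ((k:ℕ):ℤ) - ((d:ℤ)+1) * (m - m') with hz_def
    have hzr : (z:ℝ) = ((k':ℕ):ℝ) - (k:ℕ) - ((d:ℝ)+1) * (m - m') := by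
      push_cast [hz_def]; ring
    have hz0 : z = 0 := by
      have ha : (z:ℝ) < 1 := by rw [hzr]; linarith
      have hb : (-1 : ℝ) < z := by rw [hzr]; linarith
      have ha' : z < 1 := by exact_mod_cast ha
      have hb' : -1 < z := by exact_mod_cast hb
      omega
    have heq : ((k':ℕ):ℤ) - ((k:ℕ):ℤ) = ((d:ℤ)+1) * (m - m') := by omega
    have hk'bound : ((k':ℕ):ℤ) ≤ d := by exact_mod_cast Nat.lt_succ_iff.1 k'.2
    have hkbound : ((k:ℕ):ℤ) ≤ d := by exact_mod_cast Nat.lt_succ_iff.1 k.2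
    have hknn : (0:ℤ) ≤ ((k:ℕ):ℤ) := by positivity
    have hk'nn : (0:ℤ) ≤ ((k':ℕ):ℤ) := by positivity
    have hw : m - m' = 0 := by
      by_contra hw
      rcases lt_or_gt_of_ne hw with hlt | hgt
      · have : ((d:ℤ)+1) * (m - m') ≤ -((d:ℤ)+1) := by nlinarith
        omega
      · have : ((d:ℤ)+1) ≤ ((d:ℤ)+1) * (m - m') := by nlinarith
        omega
    have : ((k':ℕ):ℤ) = ((k:ℕ):ℤ) := by rw [hw, mul_zero] at heq; omega
    have : (k':ℕ) = (k:ℕ) := by exact_mod_cast this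
    exact (Fin.ext this).symm
  -- at most d bad k's, so a good k exists
  set B : Finset (Fin (d+1)) := Finset.univ.filter (fun k => ∃ i, ¬ good k i) with hB
  have hBcard : B.card ≤ d := by
    have hsub : B ⊆ Finset.univ.biUnion
        (fun i : Fin d => Finset.univ.filter (fun k => ¬ good k i)) := by
      intro k hk
      rw [hB, Finset.mem_filter] at hk
      obtain ⟨-, i, hi⟩ := hk
      exact Finset.mem_biUnion.2 ⟨i, Finset.mem_univ i, Finset.mem_filter.2 ⟨Finset.mem_univ k, hi⟩⟩
    calc B.card ≤ _ := Finset.card_le_card hsub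
      _ ≤ ∑ i : Fin d, (Finset.univ.filter (fun k => ¬ good k i)).card :=
          Finset.card_biUnion_le
      _ ≤ ∑ _i : Fin d, 1 := Finset.sum_le_sum fun i _ => Finset.card_le_one.2
          (fun k hk k' hk' => huniq i k k'
            (Finset.mem_filter.1 hk).2 (Finset.mem_filter.1 hk').2)
      _ = d := by simp
  have hex : ∃ k : Fin (d+1), k ∉ B := by
    by_contra hall
    push_neg at hall
    have : Finset.univ ⊆ B := fun k _ => hall k
    have := Finset.card_le_card this
    simp only [Finset.card_univ, Fintype.card_fin] at this
    omega
  obtain ⟨k, hk⟩ := hex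
  have hgoodk : ∀ i, good k i := by
    intro i
    by_contra hbad'
    exact hk (Finset.mem_filter.2 ⟨Finset.mem_univ k, ⟨i, hbad'⟩⟩)
  choose m hm using hgoodk
  exact ⟨k, m, fun i => hm i⟩

/-- Bricks of the same family are disjoint. -/
lemma brick_inj (d : ℕ) {s : ℝ} (hs : 0 < s) (k : ℕ) {m m' : Fin d → ℤ}
    {y : EuclideanSpace ℝ (Fin d)}
    (h : y ∈ brick d s k m) (h' : y ∈ brick d s k m') : m = m' := by
  funext i
  have A := (h i).1
  have B := (h' i).2
  have A' := (h' i).1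
  have B' := (h i).2
  -- from A < y i < B' : (d+1)(m i - m' i) < d + 1/2
  have key : ∀ a b : ℤ, s * (((d:ℝ)+1) * a + k) - s/4 < y i →
      y i < s * (((d:ℝ)+1) * b + k + d) + s/4 → a ≤ b := by
    intro a b hA hB
    have h1 : s * (((d:ℝ)+1) * a + k) - s/4 < s * (((d:ℝ)+1) * b + k + d) + s/4 :=
      lt_trans hA hB
    have h2 : ((d:ℝ)+1) * a < ((d:ℝ)+1) * b + d + 1/2 := by nlinarith
    have h3 : ((d:ℝ)+1) * (a - b) < (d:ℝ) + 1 := by push_cast; nlinarith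
    have h4 : ((a:ℝ) - b) < 1 := by
      have hd1 : (0:ℝ) < (d:ℝ) + 1 := by positivity
      nlinarith
    have : (a:ℝ) < (b:ℝ) + 1 := by linarith
    have : a < b + 1 := by exact_mod_cast this
    omega
  have h1 : m i ≤ m' i := key (m i) (m' i) A B
  have h2 : m' i ≤ m i := key (m' i) (m i) A' B'
  omega

/-- Diameter bound for bricks. -/
lemma brick_edist_le (d : ℕ) {s : ℝ} (hs : 0 < s) (k : ℕ) (m : Fin d → ℤ)
    {u v : EuclideanSpace ℝ (Fin d)} (hu : u ∈ brick d s k m) (hv : v ∈ brick d s k m) :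
    edist u v ≤ ENNReal.ofReal (s * ((d:ℝ)+1) * Real.sqrt d) := by
  rw [edist_dist]
  apply ENNReal.ofReal_le_ofReal
  have hcoord : ∀ i, dist (u i) (v i) ≤ s * ((d:ℝ)+1) := by
    intro i
    have h1 := (hu i).1
    have h2 := (hu i).2
    have h3 := (hv i).1
    have h4 := (hv i).2
    rw [Real.dist_eq, abs_le]
    constructor <;> nlinarith
  rw [EuclideanSpace.dist_eq]
  have hsum : ∑ i, dist (u i) (v i) ^ 2 ≤ (d:ℝ) * (s * ((d:ℝ)+1))^2 := by
    calc ∑ i, dist (u i) (v i) ^ 2 ≤ ∑ _i : Fin d, (s * ((d:ℝ)+1))^2 :=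
        Finset.sum_le_sum fun i _ => by
          have := hcoord i
          have := dist_nonneg (x := u i) (y := v i)
          nlinarith
      _ = (d:ℝ) * (s * ((d:ℝ)+1))^2 := by
          rw [Finset.sum_const, Finset.card_univ, Fintype.card_fin, nsmul_eq_mul]
  calc Real.sqrt (∑ i, dist (u i) (v i) ^ 2) ≤ Real.sqrt ((d:ℝ) * (s * ((d:ℝ)+1))^2) :=
      Real.sqrt_le_sqrt hsum
    _ = Real.sqrt d * (s * ((d:ℝ)+1)) := by
        rw [Real.sqrt_mul (by positivity), Real.sqrt_sq (by positivity)]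
    _ = s * ((d:ℝ)+1) * Real.sqrt d := by ring


end Petrunin

open Petrunin in
/-- a compact metric space admitting an intrinsic isometry into `ℝ^d` has
Lebesgue covering dimension at most `d`. -/
theorem covDim_le_of_intrinsicIsometry {X : Type*} [MetricSpace X] [CompactSpace X] (d : ℕ)
    (h : ∃ ι : X → EuclideanSpace ℝ (Fin d), IsIntrinsicIsometry ι) :
    CovDimLE X d := by
  classical
  obtain ⟨ι, hι⟩ := h
  intro n U hUopen hUcov
  rcases isEmpty_or_nonempty X with hX | hX
  · refine ⟨0, Fin.elim0, fun j => j.elim0, ?_, fun j => j.elim0, fun x => (hX.false x).elim⟩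
    rw [Set.univ_eq_empty_iff.2 hX]
    exact Set.iUnion_of_empty _
  -- nonempty case
  obtain ⟨x₀⟩ := hX
  have hi₀ : ∃ i₀ : Fin n, True := by
    have : x₀ ∈ ⋃ i, U i := by rw [hUcov]; trivial
    obtain ⟨i, -⟩ := Set.mem_iUnion.1 this
    exact ⟨i, trivial⟩
  obtain ⟨i₀, -⟩ := hi₀
  -- Lebesgue number
  obtain ⟨δ, hδ, hleb⟩ := lebesgue_number_lemma_of_metric
    (isCompact_univ : IsCompact (Set.univ : Set X)) hUopen (by rw [hUcov])
  -- uniform approximation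
  obtain ⟨ε, hε, hstar⟩ := star hι (ρ := ENNReal.ofReal (δ/4))
    (ENNReal.ofReal_pos.2 (by linarith))
  -- packing bound
  obtain ⟨N, hN⟩ := exists_packing_bound X hε
  -- scale
  set C : ℝ := ((d:ℝ)+1) * Real.sqrt d + 1 with hC_def
  have hC : 0 < C := by positivity
  set s : ℝ := δ / (16 * ((N:ℝ)+1) * C) with hs_def
  have hs : 0 < s := by positivity
  set Breal : ℝ := s * ((d:ℝ)+1) * Real.sqrt d with hBreal_def
  have hBreal_nonneg : 0 ≤ Breal := by positivity
  have hkey : s * (16 * ((N:ℝ)+1) * C) = δ := by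
    rw [hs_def]; field_simp
  have hB8 : 2*(N:ℝ)*Breal ≤ δ/8 := by
    have h1 : Breal ≤ s * C := by
      rw [hBreal_def, hC_def]
      nlinarith [Real.sqrt_nonneg (d:ℝ), hs.le]
    have h2 : 2*(N:ℝ)*Breal ≤ 2*(N:ℝ)*(s*C) := by
      have : (0:ℝ) ≤ 2*(N:ℝ) := by positivity
      nlinarith
    have h3 : 2*(N:ℝ)*(s*C) ≤ δ/8 := by nlinarith [hs.le, hC.le]
    linarith
  -- the chain class machinery
  set W : (X × (Fin (d+1) × (Fin d → ℤ))) → Set X :=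
    fun q => {y | ChainIn ε (ι ⁻¹' brick d s (q.2.1 : ℕ) q.2.2) q.1 y} with hW_def
  have hWopen : ∀ q, IsOpen (W q) :=
    fun q => isOpen_chainClass hε ((isOpen_brick d s _ _).preimage hι.1) _
  have hWcov : (Set.univ : Set X) ⊆ ⋃ q, W q := by
    intro x _
    obtain ⟨k, m, hkm⟩ := brick_cover d hs (ι x)
    exact Set.mem_iUnion.2 ⟨(x, (k, m)), ChainIn.refl hkm⟩
  -- the diameter bound for chain classes
  have hWdiam : ∀ (k : ℕ) (mm : Fin d → ℤ) (u v : X),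
      ChainIn ε (ι ⁻¹' brick d s k mm) u v → dist u v ≤ 3*δ/8 := by
    intro k mm u v hch
    obtain ⟨nn, c, hn2N, hc, hmem⟩ := hch.exists_short hε hN
    have hsum : pullEps ι ε u v ≤ ENNReal.ofReal ((2*N : ℕ) * Breal) := by
      refine (pullEps_le_sum ι hc).trans ?_
      have hterm : ∀ i ∈ Finset.range nn,
          edist (ι (c i)) (ι (c (i+1))) ≤ ENNReal.ofReal Breal := by
        intro i hi
        have hi' := Finset.mem_range.1 hi
        exact brick_edist_le d hs k mm (hmem i (by omega)) (hmem (i+1) (by omega))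
      calc ∑ i ∈ Finset.range nn, edist (ι (c i)) (ι (c (i+1)))
          ≤ ∑ _i ∈ Finset.range nn, ENNReal.ofReal Breal := Finset.sum_le_sum hterm
        _ = (nn : ℝ≥0∞) * ENNReal.ofReal Breal := by
            rw [Finset.sum_const, Finset.card_range, nsmul_eq_mul]
        _ ≤ ((2*N : ℕ) : ℝ≥0∞) * ENNReal.ofReal Breal := by
            exact mul_le_mul_left (by exact_mod_cast Nat.cast_le.2 hn2N) _
        _ = ENNReal.ofReal ((2*N : ℕ) * Breal) := by
            rw [← ENNReal.ofReal_natCast (2*N), ← ENNReal.ofReal_mul (by positivity)]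
    have hfin : edist u v ≤ ENNReal.ofReal (3*δ/8) := by
      calc edist u v ≤ pullEps ι ε u v + ENNReal.ofReal (δ/4) := hstar u v
        _ ≤ ENNReal.ofReal ((2*N : ℕ) * Breal) + ENNReal.ofReal (δ/4) :=
            add_le_add_left hsum _
        _ ≤ ENNReal.ofReal (δ/8) + ENNReal.ofReal (δ/4) := by
            refine add_le_add_left (ENNReal.ofReal_le_ofReal ?_) _
            push_cast
            linarith
        _ = ENNReal.ofReal (3*δ/8) := by
            rw [← ENNReal.ofReal_add (by linarith) (by linarith)]
            congr 1
            ring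
    rw [edist_dist] at hfin
    exact (ENNReal.ofReal_le_ofReal_iff (by linarith)).1 hfin
  -- finite subcover
  obtain ⟨t, ht⟩ := isCompact_univ.elim_finite_subcover W hWopen hWcov
  set T : Finset (Set X) := t.image W with hT_def
  set V : Fin T.card → Set X := fun j => ((T.equivFin.symm j : {A // A ∈ T}) : Set X)
    with hV_def
  have hVmem : ∀ j, ∃ q, q ∈ t ∧ W q = V j := by
    intro j
    have h2 : (↑(T.equivFin.symm j) : Set X) ∈ t.image W := (T.equivFin.symm j).2
    obtain ⟨q, hq, he⟩ := Finset.mem_image.1 h2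
    exact ⟨q, hq, he⟩
  have hVinj : Function.Injective V := by
    intro j j' he
    exact T.equivFin.symm.injective (Subtype.coe_injective he)
  refine ⟨T.card, V, ?_, ?_, ?_, ?_⟩
  · intro j
    obtain ⟨q, -, he⟩ := hVmem j
    rw [← he]
    exact hWopen q
  · refine Set.eq_univ_of_univ_subset ?_
    intro x hx
    have := ht hx
    obtain ⟨q, hq, hxq⟩ := Set.mem_iUnion₂.1 this
    have hA : W q ∈ T := by
      rw [hT_def]; exact Finset.mem_image_of_mem W hq
    refine Set.mem_iUnion.2 ⟨T.equivFin ⟨W q, hA⟩, ?_⟩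
    show x ∈ V (T.equivFin ⟨W q, hA⟩)
    rw [hV_def]
    simp only [Equiv.symm_apply_apply]
    exact hxq
  · intro j
    by_cases hne : (V j).Nonempty
    · obtain ⟨a, ha⟩ := hne
      obtain ⟨i, hball⟩ := hleb a (Set.mem_univ a)
      refine ⟨i, fun z hz => hball ?_⟩
      rw [Metric.mem_ball]
      obtain ⟨q, -, he⟩ := hVmem j
      rw [← he] at ha hz
      have hch : ChainIn ε (ι ⁻¹' brick d s (q.2.1 : ℕ) q.2.2) a z :=
        (ChainIn.symm ha).trans hz
      have := hWdiam _ _ a z hch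
      rw [dist_comm]
      linarith
    · rw [Set.not_nonempty_iff_eq_empty] at hne
      exact ⟨i₀, by rw [hne]; exact Set.empty_subset _⟩
  · intro x
    choose qf hqt hqW using hVmem
    have hmain : Set.InjOn (fun j => (qf j).2.1) {j : Fin T.card | x ∈ V j} := by
      intro j hj j' hj' hkk
      simp only [Set.mem_setOf_eq] at hj hj'
      have hx1 : ChainIn ε (ι ⁻¹' brick d s ((qf j).2.1 : ℕ) (qf j).2.2) (qf j).1 x := by
        rw [← hqW j] at hj; exact hj
      have hx2 : ChainIn ε (ι ⁻¹' brick d s ((qf j').2.1 : ℕ) (qf j').2.2) (qf j').1 x := by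
        rw [← hqW j'] at hj'; exact hj'
      have hb1 : ι x ∈ brick d s ((qf j).2.1 : ℕ) (qf j).2.2 := hx1.mem_right
      have hb2 : ι x ∈ brick d s ((qf j').2.1 : ℕ) (qf j').2.2 := hx2.mem_right
      have hkval : ((qf j).2.1 : ℕ) = ((qf j').2.1 : ℕ) := by
        simp only at hkk
        rw [hkk]
      rw [hkval] at hb1
      have hmeq : (qf j).2.2 = (qf j').2.2 := brick_inj d hs _ hb1 hb2
      have hSeq : (ι ⁻¹' brick d s ((qf j).2.1 : ℕ) (qf j).2.2) =
          (ι ⁻¹' brick d s ((qf j').2.1 : ℕ) (qf j').2.2) := by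
        rw [hkval, hmeq]
      rw [hSeq] at hx1
      have hWeq : W (qf j) = W (qf j') := by
        rw [hW_def]
        ext z
        simp only [Set.mem_setOf_eq]
        constructor
        · intro hz
          rw [hSeq] at hz
          exact hx2.trans ((ChainIn.symm hx1).trans hz)
        · intro hz
          rw [hSeq]
          exact hx1.trans ((ChainIn.symm hx2).trans hz)
      have hVeq : V j = V j' := by rw [← hqW j, ← hqW j', hWeq]
      exact hVinj hVeq
    calc ({j : Fin T.card | x ∈ V j}).ncard
        ≤ (Set.univ : Set (Fin (d+1))).ncard :=
          Set.ncard_le_ncard_of_injOn (fun j => (qf j).2.1)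
            (fun j _ => Set.mem_univ _) hmain Set.finite_univ
      _ = d + 1 := by rw [Set.ncard_univ]; simp
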